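/- In the Diestel-Leader graph DL(p,q), if x₁x₂ is a vertex with negative level (h₂(x₂) < 0), c₂ is a child of x₂ with ‖c₂‖₂ = ‖x₂‖₂ + 1, and b₁ is the parent of x₁, then b₁c₂ is adjacent to x₁x₂ and ‖b₁c₂‖ = ‖x₁x₂‖ + 1, where ‖·‖ denotes distance to the root o₁o₂. -/

import Mathlib

/-- A homogeneous tree with a Busemann (height) function `h` towards a fixed end:
the graph is connected and acyclic, every edge changes the height by exactly `1`,
every vertex has a unique neighbour of smaller height (its parent) and exactly `d`
neighbours of larger height (its children). -/
structure BusemannTree {V : Type*} (G : SimpleGraph V) (h : V → ℤ) (d : ℕ) : Prop where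
  connected : G.Connected
  acyclic : G.IsAcyclic
  height_adj : ∀ x y, G.Adj x y → h y = h x + 1 ∨ h y = h x - 1
  parent_unique : ∀ x, ∃! y, G.Adj x y ∧ h y = h x - 1
  children_card : ∀ x, {y | G.Adj x y ∧ h y = h x + 1}.ncard = d

/-- The Diestel--Leader graph: the horocyclic product of two trees. -/
def DLGraph {V₁ V₂ : Type*} (G₁ : SimpleGraph V₁) (G₂ : SimpleGraph V₂)
    (h₁ : V₁ → ℤ) (h₂ : V₂ → ℤ) :
    SimpleGraph {v : V₁ × V₂ // h₁ v.1 + h₂ v.2 = 0} where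
  Adj a b := G₁.Adj a.1.1 b.1.1 ∧ G₂.Adj a.1.2 b.1.2
  symm := ⟨fun _ _ hab => ⟨G₁.adj_symm hab.1, G₂.adj_symm hab.2⟩⟩
  loopless := ⟨fun _ hab => G₁.irrefl hab.1⟩

namespace DLAux

open SimpleGraph

section Tree

variable {V : Type*} {G : SimpleGraph V} {h : V → ℤ}

/-- The parent of a vertex, given the unique-parent property. -/
noncomputable def par (hpu : ∀ x : V, ∃! y, G.Adj x y ∧ h y = h x - 1) (x : V) : V :=
  (hpu x).exists.choose

lemma par_adj (hpu : ∀ x : V, ∃! y, G.Adj x y ∧ h y = h x - 1) (x : V) :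
    G.Adj x (par hpu x) :=
  (hpu x).exists.choose_spec.1

lemma par_height (hpu : ∀ x : V, ∃! y, G.Adj x y ∧ h y = h x - 1) (x : V) :
    h (par hpu x) = h x - 1 :=
  (hpu x).exists.choose_spec.2

lemma eq_par (hpu : ∀ x : V, ∃! y, G.Adj x y ∧ h y = h x - 1) {x y : V}
    (hadj : G.Adj x y) (hy : h y = h x - 1) : y = par hpu x :=
  (hpu x).unique ⟨hadj, hy⟩ ⟨par_adj hpu x, par_height hpu x⟩

lemma par_child (hpu : ∀ x : V, ∃! y, G.Adj x y ∧ h y = h x - 1) {x c : V}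
    (hadj : G.Adj x c) (hc : h c = h x + 1) : par hpu c = x :=
  (eq_par hpu hadj.symm (by omega)).symm

/-- An ascending walk: every step increases the height by `1`. -/
def IsAsc (h : V → ℤ) : ∀ {x y : V}, G.Walk x y → Prop
  | _, _, SimpleGraph.Walk.nil => True
  | _, _, @SimpleGraph.Walk.cons _ _ u c _ _ p => h c = h u + 1 ∧ IsAsc h p

@[simp] lemma isAsc_nil {x : V} : IsAsc h (Walk.nil : G.Walk x x) := trivial

@[simp] lemma isAsc_cons {x c y : V} (e : G.Adj x c) (p : G.Walk c y) :
    IsAsc h (Walk.cons e p) ↔ h c = h x + 1 ∧ IsAsc h p := Iff.rfl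

lemma IsAsc.height : ∀ {x y : V} (A : G.Walk x y), IsAsc h A → h y = h x + A.length
  | _, _, Walk.nil, _ => by simp
  | _, _, Walk.cons e p, hA => by
    have := IsAsc.height p hA.2
    have h1 := hA.1
    simp only [Walk.length_cons]
    push_cast
    omega

lemma IsAsc.par_iterate (hpu : ∀ x : V, ∃! y, G.Adj x y ∧ h y = h x - 1) :
    ∀ {x y : V} (A : G.Walk x y), IsAsc h A → (par hpu)^[A.length] y = x
  | _, _, Walk.nil, _ => rfl
  | _, _, Walk.cons e p, hA => by
    have ih := IsAsc.par_iterate hpu p hA.2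
    simp only [Walk.length_cons, Function.iterate_succ_apply', ih]
    exact par_child hpu e hA.1

variable (hstep : ∀ x y : V, G.Adj x y → h y = h x + 1 ∨ h y = h x - 1)

include hstep in
lemma abs_le_length : ∀ {x y : V} (W : G.Walk x y), |h x - h y| ≤ (W.length : ℤ)
  | _, _, Walk.nil => by simp
  | x, y, Walk.cons (v := v) e p => by
    have ih := abs_le_length (x := v) (y := y) p
    simp only [Walk.length_cons]
    push_cast
    rw [abs_le] at ih ⊢
    rcases hstep _ _ e with hv | hv <;> omega

include hstep in
lemma through_bound {x y : V} (W : G.Walk x y) {u : V} (hu : u ∈ W.support) :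
    |h x - h u| + |h u - h y| ≤ (W.length : ℤ) := by
  classical
  have hspec := congrArg Walk.length (W.take_spec hu)
  rw [Walk.length_append] at hspec
  have h1 := abs_le_length hstep (W.takeUntil u hu)
  have h2 := abs_le_length hstep (W.dropUntil u hu)
  push_cast [← hspec]
  omega

variable (hpu : ∀ x : V, ∃! y, G.Adj x y ∧ h y = h x - 1)

include hstep hpu in
lemma asc_of_cons_up : ∀ {v y : V} (P : G.Walk v y) {x : V} (e : G.Adj x v),
    (Walk.cons e P).IsPath → h v = h x + 1 → IsAsc h (Walk.cons e P)
  | _, _, Walk.nil, _, e, _, hv => ⟨hv, trivial⟩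
  | v, y, Walk.cons (v := w) e' Q, x, e, hpath, hv => by
    refine ⟨hv, ?_⟩
    rcases hstep _ _ e' with hw | hw
    · exact asc_of_cons_up Q e' hpath.of_cons hw
    · exfalso
      have hxw : x = w := by
        rw [eq_par hpu e.symm (by omega), eq_par hpu e' hw]
      have hnot : x ∉ (Walk.cons e' Q).support := (Walk.cons_isPath_iff _ _).1 hpath |>.2
      apply hnot
      rw [hxw, Walk.support_cons]
      exact List.mem_cons_of_mem _ Q.start_mem_support

include hstep hpu in
lemma path_decomp : ∀ {x y : V} (P : G.Walk x y), P.IsPath →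
    ∃ (k : ℕ) (z : V) (A : G.Walk z y), (par hpu)^[k] x = z ∧ IsAsc h A ∧
      P.length = k + A.length ∧ h z = h x - k ∧ z ∈ P.support
  | x, _, Walk.nil, _ => ⟨0, x, Walk.nil, rfl, trivial, by simp, by simp, by simp⟩
  | x, y, Walk.cons (v := v) e P, hpath => by
    rcases hstep _ _ e with hv | hv
    · refine ⟨0, x, Walk.cons e P, rfl, asc_of_cons_up hstep hpu P e hpath hv, by simp, by simp,
        Walk.start_mem_support _⟩
    · obtain ⟨k, z, A, hiter, hasc, hlen, hht, hmem⟩ := path_decomp P hpath.of_cons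
      refine ⟨k + 1, z, A, ?_, hasc, ?_, ?_, ?_⟩
      · rw [Function.iterate_succ_apply, ← eq_par hpu e hv, hiter]
      · simp only [Walk.length_cons, hlen]; omega
      · push_cast
        omega
      · rw [Walk.support_cons]
        exact List.mem_cons_of_mem _ hmem

/-- The key structure of distances in a Busemann tree: the geodesic from `x` to `y`
descends from `x` to a lowest vertex `z` (an iterated parent of `x`) and then ascends
to `y`; moreover every walk from `x` to `y` passes through a vertex of height `≤ h z`. -/
lemma tree_dist {d : ℕ} (hT : BusemannTree G h d) (x y : V) :
    ∃ (k : ℕ) (z : V) (A : G.Walk z y), (par hT.parent_unique)^[k] x = z ∧ IsAsc h A ∧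
      G.dist x y = k + A.length ∧ h z = h x - k ∧ h z = h y - A.length ∧
      ∀ W : G.Walk x y, ∃ u ∈ W.support, h u ≤ h z := by
  classical
  obtain ⟨P, hPpath, hPlen⟩ := hT.connected.exists_path_of_dist x y
  obtain ⟨k, z, A, hiter, hasc, hlen, hht, hmem⟩ :=
    path_decomp hT.height_adj hT.parent_unique P hPpath
  refine ⟨k, z, A, hiter, hasc, by rw [← hPlen, hlen], hht, ?_, ?_⟩
  · have := IsAsc.height A hasc
    omega
  · intro W
    refine ⟨z, ?_, le_refl _⟩
    have huniq : (⟨W.bypass, W.bypass_isPath⟩ : G.Path x y) = ⟨P, hPpath⟩ :=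
      hT.acyclic.path_unique _ _
    have hsupp : W.bypass.support = P.support := by
      rw [show W.bypass = P from congrArg Subtype.val huniq]
    exact W.support_bypass_subset (hsupp ▸ hmem)

lemma exists_child {d : ℕ} (hT : BusemannTree G h d) (hd : d ≠ 0) (x : V) :
    ∃ c, G.Adj x c ∧ h c = h x + 1 := by
  have h0 : {y | G.Adj x y ∧ h y = h x + 1}.Nonempty :=
    Set.nonempty_of_ncard_ne_zero (by rw [hT.children_card x]; exact hd)
  exact h0

end Tree

section DL

variable {V₁ V₂ : Type*} {G₁ : SimpleGraph V₁} {G₂ : SimpleGraph V₂}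
  {h₁ : V₁ → ℤ} {h₂ : V₂ → ℤ} {p q : ℕ}

variable (hT₁ : BusemannTree G₁ h₁ p) (hT₂ : BusemannTree G₂ h₂ q)

/-- Projection of the Diestel--Leader graph onto the first tree. -/
def proj₁ : DLGraph G₁ G₂ h₁ h₂ →g G₁ where
  toFun v := v.1.1
  map_rel' hab := hab.1

/-- Projection of the Diestel--Leader graph onto the second tree. -/
def proj₂ : DLGraph G₁ G₂ h₁ h₂ →g G₂ where
  toFun v := v.1.2
  map_rel' hab := hab.2

include hT₁ in
lemma dl_step (x y : {v : V₁ × V₂ // h₁ v.1 + h₂ v.2 = 0})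
    (hadj : (DLGraph G₁ G₂ h₁ h₂).Adj x y) :
    h₁ y.1.1 = h₁ x.1.1 + 1 ∨ h₁ y.1.1 = h₁ x.1.1 - 1 :=
  hT₁.height_adj _ _ hadj.1

include hT₁ hT₂ in
/-- Go `n` steps down in the second tree (forced to parents), up in the first
tree (arbitrary children). -/
lemma walk_up1 (hp : p ≠ 0) : ∀ (n : ℕ) (v : {v : V₁ × V₂ // h₁ v.1 + h₂ v.2 = 0}),
    ∃ (w : {v : V₁ × V₂ // h₁ v.1 + h₂ v.2 = 0}) (Ω : (DLGraph G₁ G₂ h₁ h₂).Walk v w),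
      Ω.length = n ∧ w.1.2 = (par hT₂.parent_unique)^[n] v.1.2 ∧
      (par hT₁.parent_unique)^[n] w.1.1 = v.1.1
  | 0, v => ⟨v, Walk.nil, rfl, rfl, rfl⟩
  | n + 1, v => by
    obtain ⟨c₁, hc₁adj, hc₁ht⟩ := exists_child hT₁ hp v.1.1
    set v' : {v : V₁ × V₂ // h₁ v.1 + h₂ v.2 = 0} :=
      ⟨(c₁, par hT₂.parent_unique v.1.2), by
        have := par_height hT₂.parent_unique v.1.2
        have := v.2
        dsimp only
        omega⟩ with hv'
    have hadj : (DLGraph G₁ G₂ h₁ h₂).Adj v v' := ⟨hc₁adj, par_adj hT₂.parent_unique v.1.2⟩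
    obtain ⟨w, Ω, hlen, hw2, hw1⟩ := walk_up1 hp n v'
    refine ⟨w, Walk.cons hadj Ω, by simp [hlen], ?_, ?_⟩
    · rw [hw2, Function.iterate_succ_apply]
    · rw [Function.iterate_succ_apply', hw1]
      exact par_child hT₁.parent_unique hc₁adj hc₁ht

include hT₁ hT₂ in
/-- Go `n` steps down in the first tree (forced to parents), up in the second
tree (arbitrary children). -/
lemma walk_up2 (hq : q ≠ 0) : ∀ (n : ℕ) (v : {v : V₁ × V₂ // h₁ v.1 + h₂ v.2 = 0}),
    ∃ (w : {v : V₁ × V₂ // h₁ v.1 + h₂ v.2 = 0}) (Ω : (DLGraph G₁ G₂ h₁ h₂).Walk v w),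
      Ω.length = n ∧ w.1.1 = (par hT₁.parent_unique)^[n] v.1.1 ∧
      (par hT₂.parent_unique)^[n] w.1.2 = v.1.2
  | 0, v => ⟨v, Walk.nil, rfl, rfl, rfl⟩
  | n + 1, v => by
    obtain ⟨c₂, hc₂adj, hc₂ht⟩ := exists_child hT₂ hq v.1.2
    set v' : {v : V₁ × V₂ // h₁ v.1 + h₂ v.2 = 0} :=
      ⟨(par hT₁.parent_unique v.1.1, c₂), by
        have := par_height hT₁.parent_unique v.1.1
        have := v.2
        dsimp only
        omega⟩ with hv'
    have hadj : (DLGraph G₁ G₂ h₁ h₂).Adj v v' := ⟨par_adj hT₁.parent_unique v.1.1, hc₂adj⟩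
    obtain ⟨w, Ω, hlen, hw1, hw2⟩ := walk_up2 hq n v'
    refine ⟨w, Walk.cons hadj Ω, by simp [hlen], ?_, ?_⟩
    · rw [hw1, Function.iterate_succ_apply]
    · rw [Function.iterate_succ_apply', hw2]
      exact par_child hT₂.parent_unique hc₂adj hc₂ht

include hT₁ hT₂ in
/-- Follow an ascending walk in the second tree, going down to parents in the first. -/
lemma walk_asc2 : ∀ {x₂ y₂ : V₂} (A : G₂.Walk x₂ y₂), IsAsc h₂ A →
    ∀ (v : {v : V₁ × V₂ // h₁ v.1 + h₂ v.2 = 0}), v.1.2 = x₂ →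
    ∃ (w : {v : V₁ × V₂ // h₁ v.1 + h₂ v.2 = 0}) (Ω : (DLGraph G₁ G₂ h₁ h₂).Walk v w),
      Ω.length = A.length ∧ w.1.2 = y₂ ∧
      w.1.1 = (par hT₁.parent_unique)^[A.length] v.1.1
  | _, _, Walk.nil, _, v, hv => ⟨v, Walk.nil, by simp, hv, rfl⟩
  | x₂, y₂, Walk.cons (v := c₂) e A, hA, v, hv => by
    set v' : {v : V₁ × V₂ // h₁ v.1 + h₂ v.2 = 0} :=
      ⟨(par hT₁.parent_unique v.1.1, c₂), by
        have := par_height hT₁.parent_unique v.1.1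
        have hc := hA.1
        have := v.2
        rw [hv] at this
        dsimp only
        omega⟩ with hv'
    have hadj : (DLGraph G₁ G₂ h₁ h₂).Adj v v' :=
      ⟨par_adj hT₁.parent_unique v.1.1, hv ▸ e⟩
    obtain ⟨w, Ω, hlen, hw2, hw1⟩ := walk_asc2 A hA.2 v' rfl
    refine ⟨w, Walk.cons hadj Ω, by simp [hlen], hw2, ?_⟩
    · rw [hw1, Walk.length_cons, Function.iterate_succ_apply]

include hT₁ hT₂ in
/-- Follow an ascending walk in the first tree, going down to parents in the second. -/
lemma walk_asc1 : ∀ {x₁ y₁ : V₁} (A : G₁.Walk x₁ y₁), IsAsc h₁ A →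
    ∀ (v : {v : V₁ × V₂ // h₁ v.1 + h₂ v.2 = 0}), v.1.1 = x₁ →
    ∃ (w : {v : V₁ × V₂ // h₁ v.1 + h₂ v.2 = 0}) (Ω : (DLGraph G₁ G₂ h₁ h₂).Walk v w),
      Ω.length = A.length ∧ w.1.1 = y₁ ∧
      w.1.2 = (par hT₂.parent_unique)^[A.length] v.1.2
  | _, _, Walk.nil, _, v, hv => ⟨v, Walk.nil, by simp, hv, rfl⟩
  | x₁, y₁, Walk.cons (v := c₁) e A, hA, v, hv => by
    set v' : {v : V₁ × V₂ // h₁ v.1 + h₂ v.2 = 0} :=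
      ⟨(c₁, par hT₂.parent_unique v.1.2), by
        have := par_height hT₂.parent_unique v.1.2
        have hc := hA.1
        have := v.2
        rw [hv] at this
        dsimp only
        omega⟩ with hv'
    have hadj : (DLGraph G₁ G₂ h₁ h₂).Adj v v' :=
      ⟨hv ▸ e, par_adj hT₂.parent_unique v.1.2⟩
    obtain ⟨w, Ω, hlen, hw1, hw2⟩ := walk_asc1 A hA.2 v' rfl
    refine ⟨w, Walk.cons hadj Ω, by simp [hlen], hw1, ?_⟩
    · rw [hw2, Walk.length_cons, Function.iterate_succ_apply]

include hT₁ hT₂ in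
/-- Upper bound: an explicit walk in the DL graph from `x` to the root `o` of length
`d₁ + d₂ - h₁ x₁` (for `x` with nonnegative `h₁`-height). -/
lemma dl_upper (hp : p ≠ 0) (hq : q ≠ 0)
    (x o : {v : V₁ × V₂ // h₁ v.1 + h₂ v.2 = 0})
    (ho : h₁ o.1.1 = 0) (hx : 0 ≤ h₁ x.1.1) :
    ∃ Ω : (DLGraph G₁ G₂ h₁ h₂).Walk x o,
      (Ω.length : ℤ) = G₁.dist x.1.1 o.1.1 + G₂.dist x.1.2 o.1.2 - h₁ x.1.1 := by
  obtain ⟨k₁, z₁, A₁, hiter₁, hasc₁, hdist₁, hht₁, hht₁', -⟩ := tree_dist hT₁ x.1.1 o.1.1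
  obtain ⟨k₂, z₂, A₂, hiter₂, hasc₂, hdist₂, hht₂, hht₂', -⟩ := tree_dist hT₂ x.1.2 o.1.2
  set l₁ := A₁.length with hl₁
  set l₂ := A₂.length with hl₂
  set s := h₁ x.1.1 with hs
  have hxo2 : h₂ x.1.2 = -s := by have := x.2; omega
  have hoo2 : h₂ o.1.2 = 0 := by have := o.2; omega
  -- height bookkeeping
  have hk₁ : (k₁ : ℤ) = s + l₁ := by omega
  have hk₂ : (k₂ : ℤ) = l₂ - s := by omega
  have hkl : l₁ + l₂ = k₁ + k₂ := by omega
  -- Phase 1: descend in tree 2 to z₂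
  obtain ⟨w₁, Ω₁, hΩ₁len, hw₁2, hw₁1⟩ := walk_up1 hT₁ hT₂ hp k₂ x
  have hw₁2' : w₁.1.2 = z₂ := by rw [hw₁2, hiter₂]
  -- Phase 2a: ascend in tree 2 along A₂ to o₂
  obtain ⟨w₂, Ω₂, hΩ₂len, hw₂2, hw₂1⟩ := walk_asc2 hT₁ hT₂ A₂ hasc₂ w₁ hw₁2'
  -- Phase 2b: descend in tree 1 for l₁ more steps
  obtain ⟨w₃, Ω₃, hΩ₃len, hw₃1, hw₃2⟩ := walk_up2 hT₁ hT₂ hq l₁ w₂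
  have hw₃1' : w₃.1.1 = z₁ := by
    rw [hw₃1, hw₂1, ← Function.iterate_add_apply, hkl, Function.iterate_add_apply,
      hw₁1, hiter₁]
  -- Phase 3: ascend in tree 1 along A₁ to o₁
  obtain ⟨w₄, Ω₄, hΩ₄len, hw₄1, hw₄2⟩ := walk_asc1 hT₁ hT₂ A₁ hasc₁ w₃ hw₃1'
  have hw₄ : w₄ = o := by
    apply Subtype.ext
    apply Prod.ext
    · exact hw₄1
    · rw [hw₄2, ← hl₁, hw₃2]; exact hw₂2
  subst hw₄
  refine ⟨Ω₁.append (Ω₂.append (Ω₃.append Ω₄)), ?_⟩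
  simp only [Walk.length_append, hΩ₁len, hΩ₂len, hΩ₃len, hΩ₄len, hdist₁, hdist₂]
  push_cast
  omega

include hT₁ hT₂ in
/-- Lower bound: every walk in the DL graph from `x` to the root `o` has length at least
`d₁ + d₂ - h₁ x₁` (for `x` with nonnegative `h₁`-height). -/
lemma dl_lower (x o : {v : V₁ × V₂ // h₁ v.1 + h₂ v.2 = 0})
    (ho : h₁ o.1.1 = 0) (hx : 0 ≤ h₁ x.1.1)
    (W : (DLGraph G₁ G₂ h₁ h₂).Walk x o) :
    (G₁.dist x.1.1 o.1.1 : ℤ) + G₂.dist x.1.2 o.1.2 - h₁ x.1.1 ≤ (W.length : ℤ) := by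
  classical
  obtain ⟨k₁, z₁, A₁, -, -, hdist₁, hht₁, hht₁', hall₁⟩ := tree_dist hT₁ x.1.1 o.1.1
  obtain ⟨k₂, z₂, A₂, -, -, hdist₂, hht₂, hht₂', hall₂⟩ := tree_dist hT₂ x.1.2 o.1.2
  set l₁ := A₁.length
  set l₂ := A₂.length
  set s := h₁ x.1.1 with hs
  have hxo2 : h₂ x.1.2 = -s := by have := x.2; omega
  have hoo2 : h₂ o.1.2 = 0 := by have := o.2; omega
  set m₁ := h₁ z₁
  set m₂ := h₂ z₂
  -- step property for the DL height
  have hstepD : ∀ u v, (DLGraph G₁ G₂ h₁ h₂).Adj u v →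
      h₁ v.1.1 = h₁ u.1.1 + 1 ∨ h₁ v.1.1 = h₁ u.1.1 - 1 := dl_step hT₁
  -- a vertex of the walk with low first height
  obtain ⟨u₁, hu₁mem, hu₁⟩ := hall₁ (W.map (proj₁ (h₁ := h₁) (h₂ := h₂)))
  replace hu₁mem : u₁ ∈ (W.map (proj₁ (h₁ := h₁) (h₂ := h₂))).support := hu₁mem
  rw [Walk.support_map, List.mem_map] at hu₁mem
  obtain ⟨U, hUmem, hUeq⟩ := hu₁mem
  have hU : h₁ U.1.1 ≤ m₁ := by rw [show U.1.1 = u₁ from hUeq]; exact hu₁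
  -- a vertex of the walk with high first height
  obtain ⟨u₂, hu₂mem, hu₂⟩ := hall₂ (W.map (proj₂ (h₁ := h₁) (h₂ := h₂)))
  replace hu₂mem : u₂ ∈ (W.map (proj₂ (h₁ := h₁) (h₂ := h₂))).support := hu₂mem
  rw [Walk.support_map, List.mem_map] at hu₂mem
  obtain ⟨Z, hZmem, hZeq⟩ := hu₂mem
  have hZ : -m₂ ≤ h₁ Z.1.1 := by
    have : h₂ Z.1.2 ≤ m₂ := by rw [show Z.1.2 = u₂ from hZeq]; exact hu₂
    have := Z.2
    omega
  -- split the walk at U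
  have hspec := congrArg Walk.length (W.take_spec hUmem)
  rw [Walk.length_append] at hspec
  have hZsplit : Z ∈ (W.takeUntil U hUmem).support ∨ Z ∈ (W.dropUntil U hUmem).support := by
    rw [← Walk.mem_support_append_iff, W.take_spec hUmem]
    exact hZmem
  rcases hZsplit with hZ1 | hZ2
  · -- Z occurs before U
    have b1 := through_bound (h := fun v => h₁ v.1.1) hstepD (W.takeUntil U hUmem) hZ1
    have b2 := abs_le_length (h := fun v => h₁ v.1.1) hstepD (W.dropUntil U hUmem)
    have e1 : h₁ Z.1.1 - h₁ x.1.1 ≤ |h₁ x.1.1 - h₁ Z.1.1| := by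
      rw [abs_sub_comm]; exact le_abs_self _
    have e2 : |h₁ Z.1.1 - h₁ U.1.1| ≥ h₁ Z.1.1 - h₁ U.1.1 := le_abs_self _
    have e3 : |h₁ U.1.1 - h₁ o.1.1| ≥ -(h₁ U.1.1 - h₁ o.1.1) := neg_le_abs _
    rw [hdist₁, hdist₂]
    push_cast
    omega
  · -- Z occurs after U
    have b1 := abs_le_length (h := fun v => h₁ v.1.1) hstepD (W.takeUntil U hUmem)
    have b2 := through_bound (h := fun v => h₁ v.1.1) hstepD (W.dropUntil U hUmem) hZ2
    have e1 : |h₁ x.1.1 - h₁ U.1.1| ≥ h₁ x.1.1 - h₁ U.1.1 := le_abs_self _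
    have e2 : h₁ Z.1.1 - h₁ U.1.1 ≤ |h₁ U.1.1 - h₁ Z.1.1| := by
      rw [abs_sub_comm]; exact le_abs_self _
    have e3 : |h₁ Z.1.1 - h₁ o.1.1| ≥ h₁ Z.1.1 - h₁ o.1.1 := le_abs_self _
    rw [hdist₁, hdist₂]
    push_cast
    omega

end DL

end DLAux

/-- In `DL(p,q)`, if `x₁x₂` has negative level, `c₂` is a child of `x₂` with
`‖c₂‖₂ = ‖x₂‖₂ + 1`, and `b₁` is the parent of `x₁`, then `b₁c₂` is adjacent to
`x₁x₂` and `‖b₁c₂‖ = ‖x₁x₂‖ + 1` (distances to the root `o₁o₂`). -/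
theorem DL_step_up_at_negative_level {V₁ V₂ : Type*}
    (G₁ : SimpleGraph V₁) (G₂ : SimpleGraph V₂)
    (h₁ : V₁ → ℤ) (h₂ : V₂ → ℤ) (p q : ℕ) (hp : 2 ≤ p) (hq : 2 ≤ q)
    (hT₁ : BusemannTree G₁ h₁ p) (hT₂ : BusemannTree G₂ h₂ q)
    (o a b : {v : V₁ × V₂ // h₁ v.1 + h₂ v.2 = 0})
    (ho : h₁ o.1.1 = 0)
    (hlevel : h₂ a.1.2 < 0)
    (hparent : G₁.Adj a.1.1 b.1.1 ∧ h₁ b.1.1 = h₁ a.1.1 - 1)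
    (hchild : G₂.Adj a.1.2 b.1.2 ∧ h₂ b.1.2 = h₂ a.1.2 + 1)
    (hnorm : G₂.dist b.1.2 o.1.2 = G₂.dist a.1.2 o.1.2 + 1) :
    (DLGraph G₁ G₂ h₁ h₂).Adj a b ∧
      (DLGraph G₁ G₂ h₁ h₂).dist b o = (DLGraph G₁ G₂ h₁ h₂).dist a o + 1 := by
  open DLAux in
  have hadj : (DLGraph G₁ G₂ h₁ h₂).Adj a b := ⟨hparent.1, hchild.1⟩
  refine ⟨hadj, ?_⟩
  have hp0 : p ≠ 0 := by omega
  have hq0 : q ≠ 0 := by omega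
  set s := h₁ a.1.1 with hs
  have hs1 : 1 ≤ s := by have := a.2; omega
  have hb1 : h₁ b.1.1 = s - 1 := hparent.2
  -- upper bound walk from a to o
  obtain ⟨Ωa, hΩa⟩ := DLAux.dl_upper hT₁ hT₂ hp0 hq0 a o ho (by omega)
  -- dist a o = d₁a + d₂a - s
  have hao_ub : ((DLGraph G₁ G₂ h₁ h₂).dist a o : ℤ) ≤
      (G₁.dist a.1.1 o.1.1 : ℤ) + G₂.dist a.1.2 o.1.2 - s := by
    rw [← hΩa]
    exact_mod_cast SimpleGraph.dist_le Ωa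
  have hreach_a : (DLGraph G₁ G₂ h₁ h₂).Reachable a o := ⟨Ωa⟩
  obtain ⟨Wa, hWa⟩ := hreach_a.exists_walk_length_eq_dist
  have hao_lb := DLAux.dl_lower hT₁ hT₂ a o ho (by omega) Wa
  rw [hWa] at hao_lb
  have hao : ((DLGraph G₁ G₂ h₁ h₂).dist a o : ℤ) =
      (G₁.dist a.1.1 o.1.1 : ℤ) + G₂.dist a.1.2 o.1.2 - s := le_antisymm hao_ub hao_lb
  -- walk from b to o through a
  have hbo_ub : ((DLGraph G₁ G₂ h₁ h₂).dist b o : ℤ) ≤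
      (G₁.dist a.1.1 o.1.1 : ℤ) + G₂.dist a.1.2 o.1.2 - s + 1 := by
    have := SimpleGraph.dist_le (SimpleGraph.Walk.cons hadj.symm Ωa)
    rw [SimpleGraph.Walk.length_cons] at this
    have : ((DLGraph G₁ G₂ h₁ h₂).dist b o : ℤ) ≤ (Ωa.length : ℤ) + 1 := by exact_mod_cast this
    omega
  -- lower bound for dist b o
  have hreach_b : (DLGraph G₁ G₂ h₁ h₂).Reachable b o := ⟨SimpleGraph.Walk.cons hadj.symm Ωa⟩
  obtain ⟨Wb, hWb⟩ := hreach_b.exists_walk_length_eq_dist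
  have hbo_lb := DLAux.dl_lower hT₁ hT₂ b o ho (by omega) Wb
  rw [hWb, hb1] at hbo_lb
  -- d₁ b ≥ d₁ a - 1
  have hd1 : (G₁.dist a.1.1 o.1.1 : ℤ) ≤ G₁.dist b.1.1 o.1.1 + 1 := by
    have htri := hT₁.connected.dist_triangle (u := a.1.1) (v := b.1.1) (w := o.1.1)
    have hab1 : G₁.dist a.1.1 b.1.1 ≤ 1 := by
      have := SimpleGraph.dist_le (SimpleGraph.Walk.cons hparent.1 SimpleGraph.Walk.nil)
      simpa using this
    push_cast
    omega
  have hd2 : (G₂.dist b.1.2 o.1.2 : ℤ) = G₂.dist a.1.2 o.1.2 + 1 := by exact_mod_cast hnorm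
  -- conclude
  have : ((DLGraph G₁ G₂ h₁ h₂).dist b o : ℤ) = (DLGraph G₁ G₂ h₁ h₂).dist a o + 1 := by
    omega
  exact_mod_cast this
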